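/- arXiv:1603.01582 — 6 statements merged into one kernel-verified Lean document; each statement's English description precedes it below -/
import Mathlib

section
/- Let V and W be k-dimensional real normed spaces with unit bases η_V = {v_1,…,v_k} and η_W = {w_1,…,w_k} such that min{dist(v_i, span{v_j : j ≠ i}), dist(w_i, span{w_j : j ≠ i})} ≥ α for all i, where α > 0. Then for every linear map T : V → W, |det_{η_V,η_W}(T)| ≤ k^{k/2} ‖T‖^k α^{-k}, where ‖T‖ is the operator norm. -/
open scoped RealInnerProductSpace

/-- Hadamard's inequality, entrywise-bound form. -/
lemma hadamard_det_le {k : ℕ} (A : Matrix (Fin k) (Fin k) ℝ) {x : ℝ} (hx : 0 ≤ x)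
    (h : ∀ i j, |A i j| ≤ x) : |A.det| ≤ (Real.sqrt k * x) ^ k := by
  classical
  obtain _ | n := k
  · simp [Matrix.det_fin_zero]
  set E := EuclideanSpace ℝ (Fin (n+1))
  set f : Fin (n+1) → E := fun j => (WithLp.equiv 2 _).symm (fun i => A i j) with hf
  have hcard : Module.finrank ℝ E = Fintype.card (Fin (n+1)) := by
    simp [E, finrank_euclideanSpace]
  set std := EuclideanSpace.basisFun (Fin (n+1)) ℝ
  haveI : WellFoundedLT (Fin (n+1)) := inferInstance
  set g := InnerProductSpace.gramSchmidtOrthonormalBasis (𝕜 := ℝ) hcard f with hg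
  have hA : A = std.toBasis.toMatrix f := by
    ext i j
    simp [Module.Basis.toMatrix_apply, std, EuclideanSpace.basisFun_repr, f]
  have hmul : std.toBasis.toMatrix f
      = std.toBasis.toMatrix g.toBasis * g.toBasis.toMatrix f :=
    (Module.Basis.toMatrix_mul_toMatrix _ _ _).symm
  have h1 : |(std.toBasis.toMatrix g.toBasis).det| = 1 := by
    rw [← Module.Basis.det_apply]
    rcases std.det_to_matrix_orthonormalBasis_real g with h' | h' <;> simp [h']
  have h2 : (g.toBasis.toMatrix f).det = ∏ i, ⟪g i, f i⟫ := by
    rw [← Module.Basis.det_apply, hg]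
    exact InnerProductSpace.gramSchmidtOrthonormalBasis_det (𝕜 := ℝ) hcard f
  have hnorm : ∀ j, ‖f j‖ ≤ Real.sqrt (n+1) * x := by
    intro j
    have : ‖f j‖ = Real.sqrt (∑ i, ‖A i j‖ ^ 2) := by
      rw [EuclideanSpace.norm_eq]
      rfl
    rw [this]
    calc Real.sqrt (∑ i, ‖A i j‖ ^ 2) ≤ Real.sqrt (∑ _i : Fin (n+1), x ^ 2) := by
          apply Real.sqrt_le_sqrt
          apply Finset.sum_le_sum
          intro i _
          have := h i j
          have : ‖A i j‖ ≤ x := by rwa [Real.norm_eq_abs]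
          nlinarith [abs_nonneg (A i j), Real.norm_eq_abs (A i j)]
      _ = Real.sqrt (((n:ℝ)+1) * x ^ 2) := by
          rw [Finset.sum_const]
          norm_num [mul_comm]
      _ = Real.sqrt (n+1) * x := by
          rw [Real.sqrt_mul (by positivity), Real.sqrt_sq hx]
  calc |A.det| = |(std.toBasis.toMatrix g.toBasis).det| * |(g.toBasis.toMatrix f).det| := by
        rw [hA, hmul, Matrix.det_mul, abs_mul]
    _ = |∏ i, ⟪g i, f i⟫| := by rw [h1, h2, one_mul]
    _ ≤ ∏ i, |⟪g i, f i⟫| := by rw [Finset.abs_prod]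
    _ ≤ ∏ _i : Fin (n+1), (Real.sqrt (n+1) * x) := by
        apply Finset.prod_le_prod (fun i _ => abs_nonneg _)
        intro i _
        calc |⟪g i, f i⟫| ≤ ‖g i‖ * ‖f i‖ := abs_real_inner_le_norm _ _
          _ = ‖f i‖ := by rw [g.orthonormal.1 i, one_mul]
          _ ≤ Real.sqrt (n+1) * x := hnorm i
    _ = (Real.sqrt (n+1) * x) ^ (n+1) := by simp
    _ = (Real.sqrt ((n:ℕ)+1 : ℕ) * x) ^ (n+1) := by push_cast; ring

/-- If the basis vector `b i` keeps distance at least `α` from the span of the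
other basis vectors, the `i`-th coordinate functional is bounded by `α⁻¹`. -/
lemma repr_abs_le {k : ℕ} {W : Type*} [NormedAddCommGroup W] [NormedSpace ℝ W]
    (b : Module.Basis (Fin k) ℝ W) {α : ℝ} (hα : 0 < α)
    (hd : ∀ i, α ≤ Metric.infDist (b i)
      ((Submodule.span ℝ ((⇑b) '' {j | j ≠ i}) : Submodule ℝ W) : Set W))
    (w : W) (i : Fin k) : α * |b.repr w i| ≤ ‖w‖ := by
  classical
  set c := b.repr w i with hc
  by_cases h0 : c = 0
  · rw [h0]
    simpa using norm_nonneg w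
  have habs : (0:ℝ) < |c| := abs_pos.mpr h0
  have hw : c⁻¹ • w = ∑ j, (c⁻¹ * b.repr w j) • b j := by
    conv_lhs => rw [← b.sum_repr w]
    rw [Finset.smul_sum]
    simp [smul_smul]
  have hrepr : b i - c⁻¹ • w
      = - ∑ j ∈ Finset.univ.erase i, (c⁻¹ * b.repr w j) • b j := by
    rw [hw, ← Finset.add_sum_erase Finset.univ _ (Finset.mem_univ i), ← hc,
      inv_mul_cancel₀ h0, one_smul]
    abel
  have hmem : b i - c⁻¹ • w ∈ Submodule.span ℝ ((⇑b) '' {j | j ≠ i}) := by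
    rw [hrepr]
    refine neg_mem (Submodule.sum_mem _ fun j hj => Submodule.smul_mem _ _ ?_)
    exact Submodule.subset_span ⟨j, (Finset.mem_erase.mp hj).1, rfl⟩
  have hle : Metric.infDist (b i)
      ((Submodule.span ℝ ((⇑b) '' {j | j ≠ i}) : Submodule ℝ W) : Set W)
        ≤ |c|⁻¹ * ‖w‖ := by
    have := Metric.infDist_le_dist_of_mem (x := b i) hmem
    rwa [dist_eq_norm, sub_sub_cancel, norm_smul, norm_inv, Real.norm_eq_abs] at this
  have h1 := (hd i).trans hle
  have h2 := mul_le_mul_of_nonneg_right h1 (abs_nonneg c)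
  rwa [mul_assoc, mul_comm ‖w‖, ← mul_assoc, inv_mul_cancel₀ (ne_of_gt habs), one_mul]
    at h2

/-- If `η_V`, `η_W` are unit bases whose vectors keep distance at least `α` from
the span of the remaining basis vectors, then for every (continuous) linear map
`T : V → W` we have `|det_{η_V,η_W}(T)| ≤ k^{k/2} ‖T‖^k α^{-k}`. -/
theorem abs_det_in_bases_le
    {k : ℕ} {V W : Type*}
    [NormedAddCommGroup V] [NormedSpace ℝ V]
    [NormedAddCommGroup W] [NormedSpace ℝ W]
    (ηV : Module.Basis (Fin k) ℝ V) (ηW : Module.Basis (Fin k) ℝ W)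
    (hunitV : ∀ i, ‖ηV i‖ = 1) (hunitW : ∀ i, ‖ηW i‖ = 1)
    {α : ℝ} (hα : 0 < α)
    (hdV : ∀ i, α ≤ Metric.infDist (ηV i)
      ((Submodule.span ℝ ((⇑ηV) '' {j | j ≠ i}) : Submodule ℝ V) : Set V))
    (hdW : ∀ i, α ≤ Metric.infDist (ηW i)
      ((Submodule.span ℝ ((⇑ηW) '' {j | j ≠ i}) : Submodule ℝ W) : Set W))
    (T : V →L[ℝ] W) :
    |(LinearMap.toMatrix ηV ηW (T : V →ₗ[ℝ] W)).det|
      ≤ (k : ℝ) ^ ((k : ℝ) / 2) * ‖T‖ ^ k * α⁻¹ ^ k := by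
  set M := LinearMap.toMatrix ηV ηW (T : V →ₗ[ℝ] W) with hM
  have hx : (0:ℝ) ≤ ‖T‖ * α⁻¹ := by positivity
  have hentry : ∀ i j, |M i j| ≤ ‖T‖ * α⁻¹ := by
    intro i j
    have h1 : α * |M i j| ≤ ‖T (ηV j)‖ := by
      have := repr_abs_le ηW hα hdW (T (ηV j)) i
      simpa [hM, LinearMap.toMatrix_apply] using this
    have h2 : ‖T (ηV j)‖ ≤ ‖T‖ := by
      have := T.le_opNorm (ηV j)
      rwa [hunitV j, mul_one] at this
    rw [mul_comm, ← le_div_iff₀ hα, div_eq_mul_inv] at h1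
    exact h1.trans (mul_le_mul_of_nonneg_right h2 (by positivity))
  have hsq : (Real.sqrt k) ^ k = (k:ℝ) ^ ((k:ℝ) / 2) := by
    rw [Real.sqrt_eq_rpow, ← Real.rpow_natCast ((k:ℝ) ^ ((1:ℝ)/2)) k,
      ← Real.rpow_mul (Nat.cast_nonneg k)]
    rw [one_div, inv_mul_eq_div]
  calc |M.det| ≤ (Real.sqrt k * (‖T‖ * α⁻¹)) ^ k := hadamard_det_le M hx hentry
    _ = (Real.sqrt k) ^ k * (‖T‖ ^ k * α⁻¹ ^ k) := by rw [mul_pow, mul_pow]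
    _ = (k : ℝ) ^ ((k : ℝ) / 2) * ‖T‖ ^ k * α⁻¹ ^ k := by rw [hsq, mul_assoc]
end

section
/- Let A and B be k×k real matrices with all entries satisfying |A_{ij}| ≤ m and |B_{ij}| ≤ m, and with |A_{ij} − B_{ij}| ≤ δ for all i, j, where m ≥ 0 and δ ≥ 0. Then |det A − det B| ≤ k^{(k/2)+1} m^{k−1} δ. -/
open Finset Matrix

-- AM-GM: product ≤ 1 from sum = k
lemma amgm_prod_le_one {k : ℕ} (hk : k ≠ 0) (μ : Fin k → ℝ) (h0 : ∀ i, 0 ≤ μ i)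
    (hs : ∑ i, μ i = k) : ∏ i, μ i ≤ 1 := by
  have hkpos : (0:ℝ) < k := by positivity
  have hw' : ∑ _i : Fin k, (1/k : ℝ) = 1 := by
    simp [Finset.sum_const]
    field_simp
  have h := Real.geom_mean_le_arith_mean_weighted Finset.univ (fun _ => (1/k:ℝ)) μ
    (fun i _ => by positivity) hw' (fun i _ => h0 i)
  have hsum : ∑ i, (1/k:ℝ) * μ i = 1 := by
    rw [← Finset.mul_sum, hs]; field_simp
  rw [hsum] at h
  have hprodnn : 0 ≤ ∏ i, μ i ^ (1/k:ℝ) :=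
    Finset.prod_nonneg fun i _ => Real.rpow_nonneg (h0 i) _
  have hpow : (∏ i, μ i ^ (1/k:ℝ)) ^ (k:ℕ) = ∏ i, μ i := by
    rw [← Finset.prod_pow]
    refine Finset.prod_congr rfl fun i _ => ?_
    rw [← Real.rpow_natCast (μ i ^ (1/k:ℝ)) k, ← Real.rpow_mul (h0 i)]
    rw [one_div, inv_mul_cancel₀ (by exact_mod_cast hk), Real.rpow_one]
  calc ∏ i, μ i = (∏ i, μ i ^ (1/k:ℝ)) ^ (k:ℕ) := hpow.symm
    _ ≤ 1 ^ (k:ℕ) := pow_le_pow_left₀ hprodnn h k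
    _ = 1 := one_pow k


lemma trace_eq_sum_eigs {k : ℕ} {G : Matrix (Fin k) (Fin k) ℝ} (hG : G.IsHermitian) :
    G.trace = ∑ i, hG.eigenvalues i := by
  conv_lhs => rw [hG.spectral_theorem]
  rw [Unitary.conjStarAlgAut_apply]
  rw [Matrix.trace_mul_comm]
  rw [← Matrix.mul_assoc]
  rw [(Matrix.mem_unitaryGroup_iff').mp (hG.eigenvectorUnitary).2, Matrix.one_mul]
  simp [Matrix.trace_diagonal]

lemma det_sq_le_prod_row_sq {k : ℕ} (M : Matrix (Fin k) (Fin k) ℝ) :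
    M.det ^ 2 ≤ ∏ i, ∑ j, M i j ^ 2 := by
  rcases Nat.eq_zero_or_pos k with hk | hk
  · subst hk; simp [Matrix.det_isEmpty]
  set d : Fin k → ℝ := fun i => ∑ j, M i j ^ 2 with hd
  have hdnn : ∀ i, 0 ≤ d i := fun i => Finset.sum_nonneg fun j _ => sq_nonneg _
  by_cases hzero : ∃ i, d i = 0
  · obtain ⟨i, hi⟩ := hzero
    have hrow : M i = 0 := by
      funext j
      have := (Finset.sum_eq_zero_iff_of_nonneg (fun j _ => sq_nonneg (M i j))).mp hi j
        (Finset.mem_univ j)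
      exact pow_eq_zero_iff (n := 2) (by norm_num) |>.mp this
    have : M.det = 0 := Matrix.det_eq_zero_of_row_eq_zero i (fun j => congrFun hrow j)
    rw [this]
    simpa using Finset.prod_nonneg fun i _ => hdnn i
  push_neg at hzero
  have hdpos : ∀ i, 0 < d i := fun i => (hdnn i).lt_of_ne (Ne.symm (hzero i))
  set c : Fin k → ℝ := fun i => Real.sqrt (d i)⁻¹ with hc
  have hc2 : ∀ i, c i ^ 2 = (d i)⁻¹ := fun i => Real.sq_sqrt (by positivity)
  set G : Matrix (Fin k) (Fin k) ℝ :=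
    (Matrix.diagonal c * M) * (Matrix.diagonal c * M)ᵀ with hG
  have hGpsd : G.PosSemidef := by
    have := Matrix.posSemidef_self_mul_conjTranspose (Matrix.diagonal c * M)
    rwa [Matrix.conjTranspose_eq_transpose_of_trivial] at this
  have hGh : G.IsHermitian := hGpsd.isHermitian
  -- diagonal entries of G
  have hGdiag : ∀ i, G i i = 1 := by
    intro i
    have : G i i = ∑ j, (c i * M i j) * (c i * M i j) := by
      rw [hG, Matrix.mul_apply]
      simp only [Matrix.transpose_apply, Matrix.diagonal_mul]
    rw [this]
    have : ∑ j, (c i * M i j) * (c i * M i j) = c i ^ 2 * d i := by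
      rw [Finset.mul_sum]; congr 1; funext j; ring
    rw [this, hc2, inv_mul_cancel₀ (hzero i)]
  -- trace of G
  have htr : G.trace = (k : ℝ) := by
    rw [Matrix.trace]
    simp only [Matrix.diag_apply]
    rw [Finset.sum_congr rfl fun i _ => hGdiag i]
    simp
  -- eigenvalues
  have hsum : ∑ i, hGh.eigenvalues i = (k : ℝ) := by
    rw [← trace_eq_sum_eigs hGh, htr]
  have hprod : G.det ≤ 1 := by
    have hdet : G.det = ∏ i, hGh.eigenvalues i := by
      have := hGh.det_eq_prod_eigenvalues
      exact_mod_cast this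
    rw [hdet]
    exact amgm_prod_le_one hk.ne' hGh.eigenvalues
      (fun i => hGpsd.eigenvalues_nonneg i) hsum
  -- compute det G
  have hdetG : G.det = (∏ i, (d i)⁻¹) * M.det ^ 2 := by
    rw [hG, Matrix.det_mul, Matrix.det_transpose, Matrix.det_mul, Matrix.det_diagonal]
    have : (∏ i, c i) ^ 2 = ∏ i, (d i)⁻¹ := by
      rw [← Finset.prod_pow]
      exact Finset.prod_congr rfl fun i _ => hc2 i
    nlinarith [this]
  rw [hdetG] at hprod
  have hpd : 0 < ∏ i, d i := Finset.prod_pos fun i _ => hdpos i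
  have : (∏ i, (d i)⁻¹) = (∏ i, d i)⁻¹ := by
    rw [← Finset.prod_inv_distrib]
  rw [this] at hprod
  calc M.det ^ 2 = (∏ i, d i) * ((∏ i, d i)⁻¹ * M.det ^ 2) := by
        field_simp
    _ ≤ (∏ i, d i) * 1 := by
        exact mul_le_mul_of_nonneg_left hprod hpd.le
    _ = ∏ i, d i := mul_one _

lemma abs_det_le_prod_bound {k : ℕ} (M : Matrix (Fin k) (Fin k) ℝ) (b : Fin k → ℝ)
    (hb : ∀ i, 0 ≤ b i) (h : ∀ i j, |M i j| ≤ b i) :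
    |M.det| ≤ Real.sqrt k ^ k * ∏ i, b i := by
  have hrhs : 0 ≤ Real.sqrt k ^ k * ∏ i, b i := by
    have := Finset.prod_nonneg (fun i (_ : i ∈ Finset.univ) => hb i)
    positivity
  have hsq : M.det ^ 2 ≤ (Real.sqrt k ^ k * ∏ i, b i) ^ 2 := by
    calc M.det ^ 2 ≤ ∏ i, ∑ j, M i j ^ 2 := det_sq_le_prod_row_sq M
      _ ≤ ∏ i, (k : ℝ) * b i ^ 2 := by
          refine Finset.prod_le_prod (fun i _ => Finset.sum_nonneg fun j _ => sq_nonneg _)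
            (fun i _ => ?_)
          calc ∑ j, M i j ^ 2 ≤ ∑ _j : Fin k, b i ^ 2 := by
                refine Finset.sum_le_sum fun j _ => ?_
                rw [← sq_abs]
                exact pow_le_pow_left₀ (abs_nonneg _) (h i j) 2
            _ = (k : ℝ) * b i ^ 2 := by simp [mul_comm]
      _ = (Real.sqrt k ^ k * ∏ i, b i) ^ 2 := by
          rw [Finset.prod_mul_distrib, Finset.prod_const, Finset.card_univ, Fintype.card_fin,
            mul_pow, ← Finset.prod_pow, ← pow_mul, mul_comm k 2, pow_mul,
            Real.sq_sqrt (Nat.cast_nonneg k)]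
  calc |M.det| = Real.sqrt (M.det ^ 2) := (Real.sqrt_sq_eq_abs _).symm
    _ ≤ Real.sqrt ((Real.sqrt k ^ k * ∏ i, b i) ^ 2) := Real.sqrt_le_sqrt hsq
    _ = Real.sqrt k ^ k * ∏ i, b i := by rw [Real.sqrt_sq hrhs]

/-- If all entries of `A` and `B` are bounded by `m` and the entries of `A - B`
are bounded by `δ`, then `|det A − det B| ≤ k^{k/2+1} m^{k−1} δ`. -/
theorem abs_det_sub_det_le
    {k : ℕ} (A B : Matrix (Fin k) (Fin k) ℝ) {m δ : ℝ}
    (hm : 0 ≤ m) (hδ : 0 ≤ δ)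
    (hA : ∀ i j, |A i j| ≤ m) (hB : ∀ i j, |B i j| ≤ m)
    (hAB : ∀ i j, |A i j - B i j| ≤ δ) :
    |A.det - B.det| ≤ (k : ℝ) ^ ((k : ℝ) / 2 + 1) * m ^ (k - 1) * δ := by
  rcases Nat.eq_zero_or_pos k with hk | hk
  · subst hk
    simp [Matrix.det_isEmpty]
  -- interpolating family
  set F : ℕ → Matrix (Fin k) (Fin k) ℝ :=
    fun t => Matrix.of fun i j => if (i : ℕ) < t then A i j else B i j with hF
  have hF0 : F 0 = B := by ext i j; simp [hF]
  have hFk : F k = A := by ext i j; simp [hF, i.isLt]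
  -- single step bound
  have step : ∀ t, t < k → |(F (t+1)).det - (F t).det| ≤
      Real.sqrt k ^ k * m ^ (k-1) * δ := by
    intro t ht
    set i₀ : Fin k := ⟨t, ht⟩ with hi₀
    have h1 : F (t+1) = (F t).updateRow i₀ (A i₀) := by
      ext i j
      rw [Matrix.updateRow_apply]
      by_cases hi : i = i₀
      · subst hi; simp [hF, hi₀]
      · have hv : (i : ℕ) ≠ t := fun hc => hi (Fin.ext hc)
        simp only [hF, Matrix.of_apply, if_neg hi]
        have : (i : ℕ) < t + 1 ↔ (i : ℕ) < t := by omega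
        rw [if_congr this rfl rfl]
    have h2 : F t = (F t).updateRow i₀ (B i₀) := by
      have : (F t) i₀ = B i₀ := by funext j; simp [hF, hi₀]
      conv_lhs => rw [← Matrix.updateRow_eq_self (F t) i₀, this]
    have h3 : (F (t+1)).det - (F t).det =
        ((F t).updateRow i₀ (A i₀ - B i₀)).det := by
      have hadd := Matrix.det_updateRow_add (F t) i₀ (A i₀ - B i₀) (B i₀)
      rw [sub_add_cancel] at hadd
      rw [h1, hadd, ← h2]
      ring
    rw [h3]
    -- bound entries
    set b : Fin k → ℝ := fun i => if i = i₀ then δ else m with hb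
    have hble : ∀ i j, |((F t).updateRow i₀ (A i₀ - B i₀)) i j| ≤ b i := by
      intro i j
      rw [Matrix.updateRow_apply]
      by_cases hi : i = i₀
      · simp only [if_pos hi, hb, Pi.sub_apply]
        exact hAB i₀ j
      · simp only [if_neg hi, hb]
        simp only [hF, Matrix.of_apply]
        split <;> [exact hA i j; exact hB i j]
    have hprod : ∏ i, b i = δ * m ^ (k-1) := by
      rw [← Finset.mul_prod_erase Finset.univ b (Finset.mem_univ i₀)]
      congr 1
      · simp [hb]
      · rw [Finset.prod_eq_pow_card (b := m) (fun i hi => by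
          simp only [hb, if_neg (Finset.mem_erase.mp hi).1]),
          Finset.card_erase_of_mem (Finset.mem_univ i₀),
          Finset.card_univ, Fintype.card_fin]
    calc |((F t).updateRow i₀ (A i₀ - B i₀)).det| ≤ Real.sqrt k ^ k * ∏ i, b i :=
          abs_det_le_prod_bound _ b (fun i => by by_cases h : i = i₀ <;> simp [hb, h, hδ, hm])
            hble
      _ = Real.sqrt k ^ k * m ^ (k-1) * δ := by rw [hprod]; ring
  -- telescope
  have htel : A.det - B.det = ∑ t ∈ Finset.range k, ((F (t+1)).det - (F t).det) := by
    rw [Finset.sum_range_sub (fun t => (F t).det), hF0, hFk]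
  rw [htel]
  calc |∑ t ∈ Finset.range k, ((F (t+1)).det - (F t).det)|
      ≤ ∑ t ∈ Finset.range k, |(F (t+1)).det - (F t).det| := Finset.abs_sum_le_sum_abs _ _
    _ ≤ ∑ t ∈ Finset.range k, Real.sqrt k ^ k * m ^ (k-1) * δ :=
        Finset.sum_le_sum fun t ht => step t (Finset.mem_range.mp ht)
    _ = k * (Real.sqrt k ^ k * m ^ (k-1) * δ) := by
        rw [Finset.sum_const, Finset.card_range]; simp [nsmul_eq_mul]
    _ = (k : ℝ) ^ ((k : ℝ) / 2 + 1) * m ^ (k - 1) * δ := by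
        have hkpos : (0:ℝ) < k := by exact_mod_cast hk
        have h1 : Real.sqrt k ^ k = (k:ℝ) ^ ((k:ℝ)/2) := by
          rw [Real.sqrt_eq_rpow, ← Real.rpow_natCast ((k:ℝ) ^ ((1:ℝ)/2)) k,
            ← Real.rpow_mul hkpos.le]
          ring_nf
        have h2 : (k:ℝ) ^ ((k:ℝ)/2 + 1) = (k:ℝ) ^ ((k:ℝ)/2) * k := by
          rw [Real.rpow_add hkpos, Real.rpow_one]
        rw [h1, h2]; ring
end

section
/- Let V and W be k-dimensional real normed spaces with unit bases η_V = {v_1,…,v_k} and η_W = {w_1,…,w_k} such that min{dist(v_i, span{v_j : j ≠ i}), dist(w_i, span{w_j : j ≠ i})} ≥ α for all i, where α > 0. Then for any two linear maps T1, T2 : V → W one has |det_{η_V,η_W}(T2) − det_{η_V,η_W}(T1)| ≤ k^{(k/2)+1} (max{‖T1‖, ‖T2‖})^{k−1} α^{-k} ‖T2 − T1‖; in particular, T ↦ det_{η_V,η_W}(T) is locally Lipschitz on the space of linear maps from V to W. -/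
open Finset

lemma my_hadamard {k : ℕ} (M : Matrix (Fin k) (Fin k) ℝ) (c : Fin k → ℝ)
    (h : ∀ i j, |M i j| ≤ c j) :
    |M.det| ≤ ∏ j, Real.sqrt k * c j := by
  classical
  set E := EuclideanSpace ℝ (Fin k) with hE
  haveI hfact : Fact (Module.finrank ℝ E = k) := ⟨finrank_euclideanSpace_fin⟩
  set f : Fin k → E := fun j => (EuclideanSpace.equiv (Fin k) ℝ).symm (fun i => M i j) with hf
  set e : OrthonormalBasis (Fin k) ℝ E := EuclideanSpace.basisFun (Fin k) ℝ with he
  set o : Orientation ℝ E (Fin k) := e.toBasis.orientation with ho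
  have h1 : |M.det| = |e.toBasis.det f| := by
    rw [Module.Basis.det_apply]
    congr 1
  have h2 := o.volumeForm_robust' e f
  have h3 := o.abs_volumeForm_apply_le f
  rw [h2] at h3
  rw [h1]
  refine h3.trans (Finset.prod_le_prod (fun j _ => norm_nonneg _) (fun j _ => ?_))
  have hcj : 0 ≤ c j := le_trans (abs_nonneg _) (h j j)
  have hnorm : ‖f j‖ = Real.sqrt (∑ i, ‖M i j‖ ^ 2) := by
    rw [EuclideanSpace.norm_eq]; rfl
  rw [hnorm]
  have hsum : (∑ i, ‖M i j‖ ^ 2) ≤ (k : ℝ) * c j ^ 2 := by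
    calc (∑ i, ‖M i j‖ ^ 2) ≤ ∑ _i : Fin k, c j ^ 2 := by
          refine Finset.sum_le_sum (fun i _ => ?_)
          have := h i j
          rw [Real.norm_eq_abs] at *
          nlinarith [abs_nonneg (M i j)]
      _ = (k : ℝ) * c j ^ 2 := by simp [mul_comm]
  calc Real.sqrt (∑ i, ‖M i j‖ ^ 2) ≤ Real.sqrt ((k : ℝ) * c j ^ 2) := Real.sqrt_le_sqrt hsum
    _ = Real.sqrt k * c j := by
        rw [Real.sqrt_mul (by positivity), Real.sqrt_sq hcj]

lemma my_det_sub {k : ℕ} (A B : Matrix (Fin k) (Fin k) ℝ) {c d : ℝ} (hc : 0 ≤ c) (hd : 0 ≤ d)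
    (hA : ∀ i j, |A i j| ≤ c) (hB : ∀ i j, |B i j| ≤ c)
    (hD : ∀ i j, |B i j - A i j| ≤ d) :
    |B.det - A.det| ≤ k * (Real.sqrt k ^ k * (c ^ (k - 1) * d)) := by
  classical
  set g : ℕ → Matrix (Fin k) (Fin k) ℝ :=
    fun m => Matrix.of fun i l => if (l : ℕ) < m then B i l else A i l with hg
  have hg0 : g 0 = A := by ext i l; simp [hg]
  have hgk : g k = B := by ext i l; simp [hg, l.isLt]
  have tele : B.det - A.det = ∑ m ∈ Finset.range k, ((g (m + 1)).det - (g m).det) := by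
    rw [Finset.sum_range_sub (fun m => (g m).det), hg0, hgk]
  rw [tele]
  refine (Finset.abs_sum_le_sum_abs _ _).trans ?_
  have hbound : ∀ m ∈ Finset.range k,
      |(g (m + 1)).det - (g m).det| ≤ Real.sqrt k ^ k * (c ^ (k - 1) * d) := by
    intro m hm
    have hmk : m < k := Finset.mem_range.1 hm
    set j : Fin k := ⟨m, hmk⟩ with hj
    have step1 : g (m + 1) = (g m).updateCol j (fun i => B i j) := by
      ext i l
      rw [Matrix.updateCol_apply]
      by_cases hl : l = j
      · subst hl; simp [hg, hj]
      · have : (l : ℕ) ≠ m := fun hh => hl (Fin.ext hh)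
        have : ((l : ℕ) < m + 1) ↔ ((l : ℕ) < m) := by omega
        simp [hg, hl, this]
    have step2 : g m = (g m).updateCol j (fun i => A i j) := by
      ext i l
      rw [Matrix.updateCol_apply]
      by_cases hl : l = j
      · subst hl; simp [hg, hj]
      · simp [hl]
    have key : (g (m + 1)).det - (g m).det
        = ((g m).updateCol j (fun i => B i j - A i j)).det := by
      have := Matrix.det_updateCol_add (g m) j
        (fun i => B i j - A i j) (fun i => A i j)
      have h2 : ((fun i => B i j - A i j) + fun i => A i j) = fun i => B i j := by
        funext i; simp
      rw [h2] at this
      rw [step1, this, ← step2]; ring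
    rw [key]
    set c' : Fin k → ℝ := fun l => if l = j then d else c with hc'
    have hent : ∀ i l, |(g m).updateCol j (fun i => B i j - A i j) i l| ≤ c' l := by
      intro i l
      rw [Matrix.updateCol_apply]
      by_cases hl : l = j
      · simpa [hc', hl] using hD i j
      · simp only [hc', if_neg hl, hg]
        by_cases hlm : (l : ℕ) < m <;> simp [hlm, Matrix.of_apply, hA, hB]
    refine (my_hadamard _ c' hent).trans_eq ?_
    rw [Finset.prod_mul_distrib, Finset.prod_const]
    congr 1
    · simp
    rw [← Finset.mul_prod_erase Finset.univ c' (Finset.mem_univ j)]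
    have : ∏ l ∈ Finset.univ.erase j, c' l = c ^ (k - 1) := by
      rw [Finset.prod_congr rfl (fun l hl => ?_), Finset.prod_const,
        Finset.card_erase_of_mem (Finset.mem_univ j), Finset.card_univ, Fintype.card_fin]
      · exact if_neg (Finset.mem_erase.1 hl).1
    rw [this, show c' j = d from if_pos rfl]; ring
  calc ∑ m ∈ Finset.range k, |(g (m + 1)).det - (g m).det|
      ≤ ∑ _m ∈ Finset.range k, Real.sqrt k ^ k * (c ^ (k - 1) * d) :=
        Finset.sum_le_sum hbound
    _ = k * (Real.sqrt k ^ k * (c ^ (k - 1) * d)) := by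
        simp [Finset.sum_const, mul_comm]

lemma my_repr_bound {k : ℕ} {W : Type*} [NormedAddCommGroup W] [NormedSpace ℝ W]
    (η : Module.Basis (Fin k) ℝ W) {α : ℝ} (hα : 0 < α)
    (hd : ∀ i, α ≤ Metric.infDist (η i)
      ((Submodule.span ℝ ((⇑η) '' {j | j ≠ i}) : Submodule ℝ W) : Set W))
    (w : W) (i : Fin k) : |η.repr w i| ≤ ‖w‖ * α⁻¹ := by
  classical
  set c := η.repr w i with hcdef
  by_cases hc : c = 0
  · rw [hc, abs_zero]; positivity
  set S := (Submodule.span ℝ ((⇑η) '' {j | j ≠ i}) : Submodule ℝ W) with hS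
  have hu : w - c • η i ∈ S := by
    have hw : w - c • η i = ∑ j ∈ Finset.univ.erase i, η.repr w j • η j := by
      have h1 : (∑ j ∈ Finset.univ.erase i, η.repr w j • η j) + η.repr w i • η i
          = ∑ j, η.repr w j • η j :=
        Finset.sum_erase_add Finset.univ _ (Finset.mem_univ i)
      have h2 : (∑ j, η.repr w j • η j) = w := η.sum_repr w
      rw [← hcdef] at h1
      rw [h2] at h1
      exact (eq_sub_of_add_eq h1).symm
    rw [hw]
    refine Submodule.sum_mem _ (fun j hj => ?_)
    refine Submodule.smul_mem _ _ (Submodule.subset_span ?_)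
    exact ⟨j, (Finset.mem_erase.1 hj).1, rfl⟩
  set s : W := -(c⁻¹ • (w - c • η i)) with hs
  have hsS : s ∈ S := Submodule.neg_mem _ (Submodule.smul_mem _ _ hu)
  have hdist : dist (η i) s = |c|⁻¹ * ‖w‖ := by
    rw [dist_eq_norm, hs, sub_neg_eq_add]
    have : η i + c⁻¹ • (w - c • η i) = c⁻¹ • w := by
      rw [smul_sub, smul_smul, inv_mul_cancel₀ hc, one_smul]
      abel
    rw [this, norm_smul, Real.norm_eq_abs, abs_inv]
  have h3 : α ≤ |c|⁻¹ * ‖w‖ := (hd i).trans (hdist ▸ Metric.infDist_le_dist_of_mem hsS)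
  have hcpos : 0 < |c| := abs_pos.2 hc
  have h4 : α * |c| ≤ ‖w‖ := by
    have h6 := mul_le_mul_of_nonneg_left h3 hcpos.le
    rwa [← mul_assoc, mul_inv_cancel₀ hcpos.ne', one_mul, mul_comm |c| α] at h6
  have h5 : 0 < α⁻¹ := inv_pos.2 hα
  nlinarith [mul_inv_cancel₀ hα.ne']

lemma my_key {k : ℕ} {V W : Type*}
    [NormedAddCommGroup V] [NormedSpace ℝ V]
    [NormedAddCommGroup W] [NormedSpace ℝ W]
    (ηV : Module.Basis (Fin k) ℝ V) (ηW : Module.Basis (Fin k) ℝ W)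
    (hunitV : ∀ i, ‖ηV i‖ = 1)
    {α : ℝ} (hα : 0 < α)
    (hdW : ∀ i, α ≤ Metric.infDist (ηW i)
      ((Submodule.span ℝ ((⇑ηW) '' {j | j ≠ i}) : Submodule ℝ W) : Set W))
    (T1 T2 : V →L[ℝ] W) :
    |(LinearMap.toMatrix ηV ηW (T2 : V →ₗ[ℝ] W)).det
        - (LinearMap.toMatrix ηV ηW (T1 : V →ₗ[ℝ] W)).det|
      ≤ (k : ℝ) ^ ((k : ℝ) / 2 + 1) * (max ‖T1‖ ‖T2‖) ^ (k - 1) * α⁻¹ ^ k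
          * ‖T2 - T1‖ := by
  classical
  rcases Nat.eq_zero_or_pos k with hk | hk
  · subst hk
    simp only [Matrix.det_isEmpty, sub_self, abs_zero]
    have h1 : ((0 : ℕ) : ℝ) ^ (((0 : ℕ) : ℝ) / 2 + 1) = 0 := by
      norm_num
    rw [h1]
    simp
  set A := LinearMap.toMatrix ηV ηW (T1 : V →ₗ[ℝ] W) with hA
  set B := LinearMap.toMatrix ηV ηW (T2 : V →ₗ[ℝ] W) with hB
  set M := max ‖T1‖ ‖T2‖ with hM
  have hM0 : 0 ≤ M := le_max_of_le_left (norm_nonneg _)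
  have hentry : ∀ (T : V →L[ℝ] W) (i j : Fin k),
      |(LinearMap.toMatrix ηV ηW (T : V →ₗ[ℝ] W)) i j| ≤ ‖T‖ * α⁻¹ := by
    intro T i j
    rw [LinearMap.toMatrix_apply]
    refine (my_repr_bound ηW hα hdW _ i).trans ?_
    have : ‖(T : V →ₗ[ℝ] W) (ηV j)‖ ≤ ‖T‖ := by
      simpa [hunitV j] using T.le_opNorm (ηV j)
    exact mul_le_mul_of_nonneg_right this (by positivity)
  have hentA : ∀ i j, |A i j| ≤ M * α⁻¹ := fun i j =>
    (hentry T1 i j).trans (mul_le_mul_of_nonneg_right (le_max_left _ _) (by positivity))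
  have hentB : ∀ i j, |B i j| ≤ M * α⁻¹ := fun i j =>
    (hentry T2 i j).trans (mul_le_mul_of_nonneg_right (le_max_right _ _) (by positivity))
  have hentD : ∀ i j, |B i j - A i j| ≤ ‖T2 - T1‖ * α⁻¹ := by
    intro i j
    have hsub : B i j - A i j
        = (LinearMap.toMatrix ηV ηW (((T2 - T1 : V →L[ℝ] W)) : V →ₗ[ℝ] W)) i j := by
      rw [ContinuousLinearMap.coe_sub, map_sub, Matrix.sub_apply]
    rw [hsub]
    exact hentry (T2 - T1) i j
  have hmain := my_det_sub A B (by positivity) (by positivity) hentA hentB hentD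
  refine hmain.trans (le_of_eq ?_)
  have hsqrt : Real.sqrt k ^ k = (k : ℝ) ^ ((k : ℝ) / 2) := by
    rw [Real.sqrt_eq_rpow, ← Real.rpow_natCast ((k : ℝ) ^ ((1 : ℝ) / 2)) k,
      ← Real.rpow_mul (Nat.cast_nonneg k)]
    congr 1
    ring
  have hkpos : (0 : ℝ) < (k : ℝ) := by exact_mod_cast hk
  have hcoef : (k : ℝ) * Real.sqrt k ^ k = (k : ℝ) ^ ((k : ℝ) / 2 + 1) := by
    rw [hsqrt, Real.rpow_add hkpos, Real.rpow_one, mul_comm]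
  have hpow : (α⁻¹) ^ (k - 1) * α⁻¹ = α⁻¹ ^ k := by
    rw [← pow_succ]
    congr 1
    omega
  calc (k : ℝ) * (Real.sqrt k ^ k * ((M * α⁻¹) ^ (k - 1) * (‖T2 - T1‖ * α⁻¹)))
      = ((k : ℝ) * Real.sqrt k ^ k) * (M ^ (k - 1) * (α⁻¹ ^ (k - 1) * α⁻¹)) * ‖T2 - T1‖ := by
        rw [mul_pow]; ring
    _ = (k : ℝ) ^ ((k : ℝ) / 2 + 1) * M ^ (k - 1) * α⁻¹ ^ k * ‖T2 - T1‖ := by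
        rw [hcoef, hpow]; ring

/-- Lipschitz estimate for the determinant in unit bases:
`|det_{η_V,η_W}(T2) − det_{η_V,η_W}(T1)| ≤ k^{k/2+1} max(‖T1‖,‖T2‖)^{k−1} α^{-k} ‖T2 − T1‖`;
in particular `T ↦ det_{η_V,η_W}(T)` is locally Lipschitz. -/
theorem abs_det_in_bases_sub_le
    {k : ℕ} {V W : Type*}
    [NormedAddCommGroup V] [NormedSpace ℝ V]
    [NormedAddCommGroup W] [NormedSpace ℝ W]
    (ηV : Module.Basis (Fin k) ℝ V) (ηW : Module.Basis (Fin k) ℝ W)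
    (hunitV : ∀ i, ‖ηV i‖ = 1) (hunitW : ∀ i, ‖ηW i‖ = 1)
    {α : ℝ} (hα : 0 < α)
    (hdV : ∀ i, α ≤ Metric.infDist (ηV i)
      ((Submodule.span ℝ ((⇑ηV) '' {j | j ≠ i}) : Submodule ℝ V) : Set V))
    (hdW : ∀ i, α ≤ Metric.infDist (ηW i)
      ((Submodule.span ℝ ((⇑ηW) '' {j | j ≠ i}) : Submodule ℝ W) : Set W)) :
    (∀ T1 T2 : V →L[ℝ] W,
      |(LinearMap.toMatrix ηV ηW (T2 : V →ₗ[ℝ] W)).det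
          - (LinearMap.toMatrix ηV ηW (T1 : V →ₗ[ℝ] W)).det|
        ≤ (k : ℝ) ^ ((k : ℝ) / 2 + 1) * (max ‖T1‖ ‖T2‖) ^ (k - 1) * α⁻¹ ^ k
            * ‖T2 - T1‖)
    ∧ LocallyLipschitz
        (fun T : V →L[ℝ] W => (LinearMap.toMatrix ηV ηW (T : V →ₗ[ℝ] W)).det) := by
  classical
  refine ⟨fun T1 T2 => my_key ηV ηW hunitV hα hdW T1 T2, ?_⟩
  intro T0
  set C : ℝ := (k : ℝ) ^ ((k : ℝ) / 2 + 1) * (‖T0‖ + 1) ^ (k - 1) * α⁻¹ ^ k with hC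
  have hC0 : 0 ≤ C := by positivity
  refine ⟨⟨C, hC0⟩, Metric.ball T0 1, Metric.ball_mem_nhds _ one_pos, ?_⟩
  refine LipschitzOnWith.of_dist_le_mul fun x hx y hy => ?_
  have hxn : ‖x‖ ≤ ‖T0‖ + 1 := by
    have h1 := mem_ball_iff_norm.1 hx
    have h2 := norm_sub_norm_le x T0
    linarith
  have hyn : ‖y‖ ≤ ‖T0‖ + 1 := by
    have h1 := mem_ball_iff_norm.1 hy
    have h2 := norm_sub_norm_le y T0
    linarith
  have key := my_key ηV ηW hunitV hα hdW y x
  show dist _ _ ≤ C * dist x y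
  have hmax : max ‖y‖ ‖x‖ ≤ ‖T0‖ + 1 := max_le hyn hxn
  calc dist ((LinearMap.toMatrix ηV ηW (x : V →ₗ[ℝ] W)).det)
        ((LinearMap.toMatrix ηV ηW (y : V →ₗ[ℝ] W)).det)
      = |(LinearMap.toMatrix ηV ηW (x : V →ₗ[ℝ] W)).det
          - (LinearMap.toMatrix ηV ηW (y : V →ₗ[ℝ] W)).det| := Real.dist_eq _ _
    _ ≤ (k : ℝ) ^ ((k : ℝ) / 2 + 1) * (max ‖y‖ ‖x‖) ^ (k - 1) * α⁻¹ ^ k * ‖x - y‖ := key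
    _ ≤ (k : ℝ) ^ ((k : ℝ) / 2 + 1) * (‖T0‖ + 1) ^ (k - 1) * α⁻¹ ^ k * dist x y := by
        rw [dist_eq_norm]
        gcongr
    _ = C * dist x y := by rw [hC]
end

section
/- Let V be a k-dimensional real normed space with a unit basis η_V = {v_1,…,v_k} satisfying dist(v_i, span{v_j : j ≠ i}) ≥ α for all i, where α > 0, let η_W = {u_1,…,u_k} be another unit basis of V, and let T : V → V be the linear map with T(v_i) = u_i for all i. Then for every Lebesgue measurable set A ⊆ V, μ_{η_V}(A) = |det_{η_V,η_V}(T)| · μ_{η_W}(A), and consequently μ_{η_V}(A) ≤ (1 + k^{(3k/2)+3} α^{-k-2} · sup_{1≤i≤k} ‖u_i − v_i‖) · μ_{η_W}(A). -/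
open Matrix Real MeasureTheory

lemma det_one_perturb {k : ℕ} (B : Matrix (Fin k) (Fin k) ℝ) {t : ℝ} (ht : 0 ≤ t)
    (hB : ∀ i j, |B i j - (1 : Matrix (Fin k) (Fin k) ℝ) i j| ≤ t) :
    |B.det - 1| ≤ (k : ℝ) * (Nat.factorial k) * t * (1 + t) ^ (k - 1) := by
  set X : ℝ := (Nat.factorial k : ℝ) * t * (1 + t) ^ (k - 1) with hX
  have hX0 : 0 ≤ X := by positivity
  set M : ℕ → Matrix (Fin k) (Fin k) ℝ :=
    fun n i j => if (i : ℕ) < n then B i j else (1 : Matrix (Fin k) (Fin k) ℝ) i j with hM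
  have key : ∀ n, n ≤ k → |(M n).det - 1| ≤ n * X := by
    intro n hn
    induction n with
    | zero =>
      have : M 0 = 1 := by
        funext i j; simp [hM]
      simp [this]
    | succ n ih =>
      have hnk : n < k := hn
      set i : Fin k := ⟨n, hnk⟩ with hi
      set E : Fin k → ℝ := fun j => B i j - (1 : Matrix (Fin k) (Fin k) ℝ) i j with hE
      have h1 : M (n + 1) = updateRow (M n) i (B i) := by
        funext i' j'
        by_cases h : i' = i
        · subst h; rw [updateRow_self]; simp [hM, hi]
        · have hne : (i' : ℕ) ≠ n := fun hc => h (Fin.ext hc)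
          rw [updateRow_ne h]
          simp only [hM]
          have hiff : (i' : ℕ) < n + 1 ↔ (i' : ℕ) < n := by omega
          simp only [hiff]
      have h2 : (M n).det = (updateRow (M n) i ((1 : Matrix (Fin k) (Fin k) ℝ) i)).det := by
        have hrow : (1 : Matrix (Fin k) (Fin k) ℝ) i = M n i := by
          funext j; simp [hM, hi]; rfl
        rw [hrow, updateRow_eq_self]
      have hsum : B i = (fun j => (1 : Matrix (Fin k) (Fin k) ℝ) i j + E j) := by
        funext j; simp [hE]
      have hdet : (M (n + 1)).det = (M n).det + (updateRow (M n) i E).det := by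
        rw [h1, hsum]
        rw [show (fun j => (1 : Matrix (Fin k) (Fin k) ℝ) i j + E j)
          = ((1 : Matrix (Fin k) (Fin k) ℝ) i + E) from rfl]
        rw [det_updateRow_add, ← h2]
      -- bound the perturbation determinant
      have hperturb : |(updateRow (M n) i E).det| ≤ X := by
        rcases eq_or_lt_of_le ht with h0 | htpos
        · -- t = 0
          have hE0 : ∀ j, E j = 0 := by
            intro j
            have := hB i j
            rw [← h0] at this
            have := abs_nonpos_iff.mp this
            simpa [hE] using this
          have : (updateRow (M n) i E).det = 0 :=
            det_eq_zero_of_row_eq_zero i (fun j => by simp [hE0 j])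
          rw [this]; simpa using hX0
        · have h1t : (0:ℝ) < 1 + t := by linarith
          set c : ℝ := t / (1 + t) with hc
          have hc0 : 0 < c := div_pos htpos h1t
          set v : Fin k → ℝ := fun j => c⁻¹ * E j with hv
          have hEv : E = c • v := by
            funext j; simp [hv, smul_eq_mul, ← mul_assoc, mul_inv_cancel₀ (ne_of_gt hc0)]
          have hentry : ∀ i' j', |(updateRow (M n) i v) i' j'| ≤ 1 + t := by
            intro i' j'
            by_cases h : i' = i
            · subst h
              rw [updateRow_self]
              have hEj := hB i j'
              have : |v j'| ≤ c⁻¹ * t := by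
                rw [hv]
                simp only [abs_mul, abs_inv, abs_of_pos hc0]
                exact mul_le_mul_of_nonneg_left hEj (by positivity)
              calc |v j'| ≤ c⁻¹ * t := this
                _ = 1 + t := by
                  rw [hc]; field_simp
            · rw [updateRow_ne h]
              simp only [hM]
              by_cases hlt : (i' : ℕ) < n
              · rw [if_pos hlt]
                have := hB i' j'
                have h1' : |(1 : Matrix (Fin k) (Fin k) ℝ) i' j'| ≤ 1 := by
                  by_cases hij : i' = j' <;> simp [Matrix.one_apply, hij]
                calc |B i' j'| = |(B i' j' - (1 : Matrix (Fin k) (Fin k) ℝ) i' j')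
                      + (1 : Matrix (Fin k) (Fin k) ℝ) i' j'| := by ring_nf
                  _ ≤ _ + _ := abs_add_le _ _
                  _ ≤ t + 1 := add_le_add (hB i' j') h1'
                  _ = 1 + t := by ring
              · rw [if_neg hlt]
                by_cases hij : i' = j' <;> simp [Matrix.one_apply, hij] <;> linarith
          have hdl := Matrix.det_le (abv := AbsoluteValue.abs) (x := 1 + t)
            (fun i' j' => by simpa [AbsoluteValue.abs_apply] using hentry i' j')
          simp only [Fintype.card_fin, nsmul_eq_mul, AbsoluteValue.abs_apply] at hdl
          have hscale : (updateRow (M n) i E).det = c * (updateRow (M n) i v).det := by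
            rw [hEv]
            exact det_updateRow_smul (M n) i c v
          rw [hscale, abs_mul, abs_of_pos hc0]
          have hk1 : k - 1 + 1 = k := Nat.succ_pred_eq_of_pos (show 0 < k by omega)
          have hpow : (1 + t) ^ k = (1 + t) ^ (k - 1) * (1 + t) := by
            rw [← pow_succ, hk1]
          calc c * |(updateRow (M n) i v).det|
              ≤ c * ((Nat.factorial k : ℝ) * (1 + t) ^ k) :=
                mul_le_mul_of_nonneg_left hdl hc0.le
            _ = X := by
                rw [hX, hpow, hc]; field_simp
      calc |(M (n + 1)).det - 1| = |((M n).det - 1) + (updateRow (M n) i E).det| := by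
            rw [hdet]; ring_nf
        _ ≤ |(M n).det - 1| + |(updateRow (M n) i E).det| := abs_add_le _ _
        _ ≤ n * X + X := add_le_add (ih (Nat.le_of_succ_le hn)) hperturb
        _ = (n + 1 : ℕ) * X := by push_cast; ring
  have hMk : M k = B := by
    funext i j; simp [hM, i.isLt]
  have := key k le_rfl
  rw [hMk] at this
  calc |B.det - 1| ≤ (k : ℝ) * X := this
    _ = (k : ℝ) * (Nat.factorial k) * t * (1 + t) ^ (k - 1) := by rw [hX]; ring


lemma pow3_le_rpow {k : ℕ} (hk : 1 ≤ k) :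
    (3 : ℝ) ^ (k - 1) ≤ (k : ℝ) ^ ((k : ℝ) / 2 + 2) := by
  have hk1 : (1 : ℝ) ≤ (k : ℝ) := by exact_mod_cast hk
  by_cases h8 : k ≤ 8
  · -- reduce to a natural-number inequality
    have hnat : (3 : ℕ) ^ (k - 1) ≤ k ^ (k / 2 + 2) := by
      interval_cases k <;> norm_num
    have h1 : (3 : ℝ) ^ (k - 1) ≤ (k : ℝ) ^ (k / 2 + 2 : ℕ) := by
      exact_mod_cast hnat
    have h2 : (k : ℝ) ^ (k / 2 + 2 : ℕ) ≤ (k : ℝ) ^ ((k : ℝ) / 2 + 2) := by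
      rw [← Real.rpow_natCast (k : ℝ) (k / 2 + 2)]
      apply Real.rpow_le_rpow_of_exponent_le hk1
      push_cast
      have := Nat.cast_div_le (m := k) (n := 2) (α := ℝ)
      push_cast at this
      linarith
    exact h1.trans h2
  · push_neg at h8
    have h9 : (9 : ℝ) ≤ (k : ℝ) := by exact_mod_cast h8
    have h3 : (3 : ℝ) ≤ (k : ℝ) ^ ((1 : ℝ) / 2) := by
      have : (3 : ℝ) = (9 : ℝ) ^ ((1:ℝ)/2) := by
        rw [show (9:ℝ) = 3 ^ (2:ℕ) by norm_num, ← Real.rpow_natCast (3:ℝ) 2,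
          ← Real.rpow_mul (by norm_num)]
        norm_num
      rw [this]
      exact Real.rpow_le_rpow (by norm_num) h9 (by norm_num)
    have h4 : (3 : ℝ) ^ (k - 1) ≤ ((k : ℝ) ^ ((1:ℝ)/2)) ^ (k - 1) :=
      pow_le_pow_left₀ (by norm_num) h3 _
    have h5 : ((k : ℝ) ^ ((1:ℝ)/2)) ^ (k - 1) = (k : ℝ) ^ ((1:ℝ)/2 * (k - 1 : ℕ)) := by
      rw [← Real.rpow_natCast ((k : ℝ) ^ ((1:ℝ)/2)) (k - 1), ← Real.rpow_mul (by positivity)]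
    have h6 : (1:ℝ)/2 * ((k : ℕ) - 1 : ℕ) ≤ (k : ℝ) / 2 + 2 := by
      have : ((k - 1 : ℕ) : ℝ) ≤ (k : ℝ) := by
        exact_mod_cast Nat.sub_le k 1
      linarith
    calc (3 : ℝ) ^ (k - 1) ≤ (k : ℝ) ^ ((1:ℝ)/2 * (k - 1 : ℕ)) := h5 ▸ h4
      _ ≤ (k : ℝ) ^ ((k : ℝ) / 2 + 2) := Real.rpow_le_rpow_of_exponent_le hk1 h6

lemma coord_bound {k : ℕ} {V : Type*} [NormedAddCommGroup V] [NormedSpace ℝ V]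
    (ηV : Module.Basis (Fin k) ℝ V) {α : ℝ} (hα : 0 < α)
    (hd : ∀ i, α ≤ Metric.infDist (ηV i)
      ((Submodule.span ℝ ((⇑ηV) '' {j | j ≠ i}) : Submodule ℝ V) : Set V))
    (x : V) (j : Fin k) : |ηV.repr x j| ≤ ‖x‖ / α := by
  set c : ℝ := ηV.repr x j with hc
  by_cases hc0 : c = 0
  · rw [hc0]; simp; positivity
  · have hmem : x - c • ηV j ∈ Submodule.span ℝ ((⇑ηV) '' {i | i ≠ j}) := by
      have hrepr : x = ∑ i, ηV.repr x i • ηV i := (ηV.sum_repr x).symm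
      have : x - c • ηV j = ∑ i ∈ Finset.univ.erase j, ηV.repr x i • ηV i := by
        rw [hrepr]
        rw [← Finset.add_sum_erase _ _ (Finset.mem_univ j)]
        simp [hc]
      rw [this]
      apply Submodule.sum_mem
      intro i hi
      apply Submodule.smul_mem
      apply Submodule.subset_span
      exact ⟨i, Finset.ne_of_mem_erase hi, rfl⟩
    set y : V := ηV j - c⁻¹ • x with hy
    have hymem : y ∈ Submodule.span ℝ ((⇑ηV) '' {i | i ≠ j}) := by
      have : y = (-c⁻¹) • (x - c • ηV j) := by
        rw [hy, smul_sub, smul_smul]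
        simp [hc0]
        module
      rw [this]
      exact Submodule.smul_mem _ _ hmem
    have h1 : α ≤ dist (ηV j) y :=
      le_trans (hd j) (Metric.infDist_le_dist_of_mem hymem)
    have h2 : dist (ηV j) y = ‖c⁻¹ • x‖ := by
      rw [dist_eq_norm, hy]
      congr 1
      abel
    rw [h2, norm_smul, norm_inv, Real.norm_eq_abs] at h1
    have habs : 0 < |c| := abs_pos.mpr hc0
    rw [le_div_iff₀ hα]
    calc |c| * α ≤ |c| * (|c|⁻¹ * ‖x‖) := by
          exact mul_le_mul_of_nonneg_left h1 habs.le
      _ = ‖x‖ := by field_simp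


/-- Change of basis for induced Lebesgue measures: if `η_V`, `η_W` are unit bases
of `V`, with the vectors of `η_V` at distance at least `α` from the span of the
remaining ones, and `T` is the linear map sending `v_i` to `u_i = w_i`, then
`μ_{η_V}(A) = |det_{η_V,η_V}(T)| μ_{η_W}(A)`, and consequently
`μ_{η_V}(A) ≤ (1 + k^{3k/2+3} α^{−k−2} sup‖u_i − v_i‖) μ_{η_W}(A)`. -/
theorem measure_change_of_unit_basis
    {k : ℕ} (hk : 0 < k) {V : Type*}
    [NormedAddCommGroup V] [NormedSpace ℝ V]
    [MeasurableSpace V] [BorelSpace V]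
    (ηV ηW : Module.Basis (Fin k) ℝ V)
    (hunitV : ∀ i, ‖ηV i‖ = 1) (hunitW : ∀ i, ‖ηW i‖ = 1)
    {α : ℝ} (hα : 0 < α)
    (hd : ∀ i, α ≤ Metric.infDist (ηV i)
      ((Submodule.span ℝ ((⇑ηV) '' {j | j ≠ i}) : Submodule ℝ V) : Set V))
    (T : V →ₗ[ℝ] V) (hT : ∀ i, T (ηV i) = ηW i) :
    ∀ A : Set V, MeasurableSet A →
      Measure.map (⇑ηV.equivFun.symm) volume A
          = ENNReal.ofReal |(LinearMap.toMatrix ηV ηV T).det|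
              * Measure.map (⇑ηW.equivFun.symm) volume A
      ∧ Measure.map (⇑ηV.equivFun.symm) volume A
          ≤ ENNReal.ofReal
              (1 + (k : ℝ) ^ (3 * (k : ℝ) / 2 + 3) * α ^ (-(k : ℝ) - 2)
                * ⨆ i, ‖ηW i - ηV i‖)
              * Measure.map (⇑ηW.equivFun.symm) volume A := by
  haveI : FiniteDimensional ℝ V := Module.Finite.of_basis ηV
  haveI : Nonempty (Fin k) := ⟨⟨0, hk⟩⟩
  have hTe : T = ↑(ηV.equiv ηW (Equiv.refl (Fin k))) := ηV.ext fun i => by simp [hT]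
  have hdet_ne : LinearMap.det T ≠ 0 := by
    rw [hTe]; exact (ηV.equiv ηW (Equiv.refl _)).isUnit_det'.ne_zero
  set d : ℝ := LinearMap.det T with hdset
  have hdd : (LinearMap.toMatrix ηV ηV T).det = d := LinearMap.det_toMatrix ηV T
  set μV := Measure.map (⇑ηV.equivFun.symm) volume with hμV
  haveI : μV.IsAddHaarMeasure := Measure.MapLinearEquiv.isAddHaarMeasure _ _
  have hcV : Continuous ⇑ηV.equivFun.symm :=
    LinearMap.continuous_of_finiteDimensional (ηV.equivFun.symm : (Fin k → ℝ) →ₗ[ℝ] V)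
  have hmT : Measurable ⇑T := T.continuous_of_finiteDimensional.measurable
  have hcomp : ⇑ηW.equivFun.symm = ⇑T ∘ ⇑ηV.equivFun.symm := by
    funext x
    simp only [Function.comp_apply, Module.Basis.equivFun_symm_apply, map_sum, LinearMap.map_smul, hT]
  have hμW : Measure.map (⇑ηW.equivFun.symm) volume = Measure.map ⇑T μV := by
    rw [hcomp, hμV]
    exact (Measure.map_map hmT hcV.measurable).symm
  intro A hA
  have heq : μV A = ENNReal.ofReal |d| * (Measure.map (⇑ηW.equivFun.symm) volume A) := by
    rw [hμW, Measure.map_apply hmT hA, Measure.addHaar_preimage_linearMap μV hdet_ne A,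
      ← mul_assoc, ← ENNReal.ofReal_mul (abs_nonneg d), abs_inv,
      mul_inv_cancel₀ (abs_ne_zero.mpr hdet_ne), ENNReal.ofReal_one, one_mul]
  refine ⟨by rw [hdd]; exact heq, ?_⟩
  -- Part 2 : the quantitative bound
  set ε : ℝ := ⨆ i, ‖ηW i - ηV i‖ with hεdef
  have hεb : ∀ i, ‖ηW i - ηV i‖ ≤ ε := fun i =>
    le_ciSup (f := fun i => ‖ηW i - ηV i‖) (Set.Finite.bddAbove (Set.finite_range _)) i
  have hε0 : 0 ≤ ε := le_trans (norm_nonneg _) (hεb ⟨0, hk⟩)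
  have hε2 : ε ≤ 2 := ciSup_le fun i => by
    calc ‖ηW i - ηV i‖ ≤ ‖ηW i‖ + ‖ηV i‖ := norm_sub_le _ _
      _ = 2 := by rw [hunitW, hunitV]; norm_num
  have hα1 : α ≤ 1 := by
    have h0 : (0 : V) ∈ ((Submodule.span ℝ ((⇑ηV) '' {j | j ≠ (⟨0, hk⟩ : Fin k)}) :
        Submodule ℝ V) : Set V) := Submodule.zero_mem _
    calc α ≤ Metric.infDist (ηV ⟨0, hk⟩) _ := hd ⟨0, hk⟩
      _ ≤ dist (ηV ⟨0, hk⟩) 0 := Metric.infDist_le_dist_of_mem h0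
      _ = 1 := by rw [dist_zero_right, hunitV]
  set t : ℝ := ε / α with htdef
  have ht0 : 0 ≤ t := by positivity
  set Mx := LinearMap.toMatrix ηV ηV T with hMxdef
  have hMx : ∀ i j, |Mx i j - (1 : Matrix (Fin k) (Fin k) ℝ) i j| ≤ t := by
    intro i j
    have h1 : Mx i j = ηV.repr (ηW j) i := by
      rw [hMxdef, LinearMap.toMatrix_apply, hT]
    have h2 : (1 : Matrix (Fin k) (Fin k) ℝ) i j = ηV.repr (ηV j) i := by
      rw [Matrix.one_apply, Module.Basis.repr_self, Finsupp.single_apply]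
      exact if_congr eq_comm rfl rfl
    have h3 : Mx i j - (1 : Matrix (Fin k) (Fin k) ℝ) i j = ηV.repr (ηW j - ηV j) i := by
      rw [h1, h2, map_sub, Finsupp.sub_apply]
    rw [h3, htdef]
    calc |ηV.repr (ηW j - ηV j) i| ≤ ‖ηW j - ηV j‖ / α := coord_bound ηV hα hd _ i
      _ ≤ ε / α := by gcongr; exact hεb j
  have hdet1 := det_one_perturb Mx ht0 hMx
  rw [hdd] at hdet1
  -- numeric bound
  have hk1 : (1 : ℝ) ≤ (k : ℝ) := by exact_mod_cast hk
  have hkk1 : k - 1 + 1 = k := Nat.succ_pred_eq_of_pos hk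
  have h1t3 : 1 + t ≤ 3 / α := by
    have ht2 : t ≤ 2 / α := by rw [htdef]; gcongr
    have h1a : 1 ≤ 1 / α := by rw [le_div_iff₀ hα]; linarith
    have : 3 / α = 1 / α + 2 / α := by ring
    linarith
  have hnum : (k : ℝ) * (Nat.factorial k) * t * (1 + t) ^ (k - 1)
      ≤ (k : ℝ) ^ (3 * (k : ℝ) / 2 + 3) * α ^ (-(k : ℝ) - 2) * ε := by
    have hstep1 : (k : ℝ) * (Nat.factorial k) * t * (1 + t) ^ (k - 1)
        ≤ (k : ℝ) * (Nat.factorial k) * (ε / α) * (3 / α) ^ (k - 1) := by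
      rw [htdef]
      exact mul_le_mul_of_nonneg_left
        (pow_le_pow_left₀ (by linarith) (by rw [htdef] at h1t3; exact h1t3) _) (by positivity)
    have hstep2 : (k : ℝ) * (Nat.factorial k) * (ε / α) * (3 / α) ^ (k - 1)
        = ((k : ℝ) * (Nat.factorial k)) * (3 : ℝ) ^ (k - 1) * (ε / α ^ k) := by
      rw [div_pow, mul_assoc, div_mul_div_comm, ← pow_succ' α (k - 1), hkk1]
      ring
    have hfact : (k : ℝ) * (Nat.factorial k) ≤ (k : ℝ) ^ (k + 1) := by
      have : (Nat.factorial k : ℝ) ≤ (k : ℝ) ^ k := by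
        exact_mod_cast Nat.factorial_le_pow k
      calc (k : ℝ) * (Nat.factorial k) ≤ (k : ℝ) * (k : ℝ) ^ k := by
            apply mul_le_mul_of_nonneg_left this (by positivity)
        _ = (k : ℝ) ^ (k + 1) := by rw [pow_succ]; ring
    have hpow2 : α ^ (k + 2) ≤ α ^ k := pow_le_pow_of_le_one hα.le hα1 (by omega)
    have hεα : ε / α ^ k ≤ ε / α ^ (k + 2) := by
      rw [div_eq_mul_inv, div_eq_mul_inv]
      exact mul_le_mul_of_nonneg_left (inv_anti₀ (pow_pos hα _) hpow2) hε0
    have hstep3 : ((k : ℝ) * (Nat.factorial k)) * (3 : ℝ) ^ (k - 1) * (ε / α ^ k)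
        ≤ (k : ℝ) ^ (k + 1) * (k : ℝ) ^ ((k : ℝ) / 2 + 2) * (ε / α ^ (k + 2)) := by
      have h3r := pow3_le_rpow hk
      have hr0 : (0:ℝ) ≤ (k : ℝ) ^ ((k : ℝ) / 2 + 2) := by positivity
      apply mul_le_mul
      · apply mul_le_mul hfact h3r (by positivity) (by positivity)
      · exact hεα
      · positivity
      · positivity
    have hrw : (k : ℝ) ^ (k + 1) * (k : ℝ) ^ ((k : ℝ) / 2 + 2) * (ε / α ^ (k + 2))
        = (k : ℝ) ^ (3 * (k : ℝ) / 2 + 3) * α ^ (-(k : ℝ) - 2) * ε := by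
      have hkpos : (0:ℝ) < (k:ℝ) := by linarith
      have e1 : (k : ℝ) ^ (k + 1) * (k : ℝ) ^ ((k : ℝ) / 2 + 2)
          = (k : ℝ) ^ (3 * (k : ℝ) / 2 + 3) := by
        rw [← Real.rpow_natCast (k : ℝ) (k + 1), ← Real.rpow_add hkpos]
        congr 1
        push_cast
        ring
      have e2 : α ^ (-(k : ℝ) - 2) = (α ^ (k + 2))⁻¹ := by
        rw [show -(k : ℝ) - 2 = -((k + 2 : ℕ) : ℝ) by push_cast; ring,
          Real.rpow_neg hα.le, Real.rpow_natCast]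
      rw [e1, e2]
      ring
    calc (k : ℝ) * (Nat.factorial k) * t * (1 + t) ^ (k - 1)
        ≤ (k : ℝ) * (Nat.factorial k) * (ε / α) * (3 / α) ^ (k - 1) := hstep1
      _ = ((k : ℝ) * (Nat.factorial k)) * (3 : ℝ) ^ (k - 1) * (ε / α ^ k) := hstep2
      _ ≤ (k : ℝ) ^ (k + 1) * (k : ℝ) ^ ((k : ℝ) / 2 + 2) * (ε / α ^ (k + 2)) := hstep3
      _ = _ := hrw
  have habs : |d| ≤ 1 + (k : ℝ) ^ (3 * (k : ℝ) / 2 + 3) * α ^ (-(k : ℝ) - 2) * ε := by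
    have h1 : |d| - 1 ≤ |d - 1| := by
      have := abs_sub_abs_le_abs_sub d 1
      simpa using this
    have := hdet1.trans hnum
    linarith [h1.trans this]
  rw [heq]
  exact mul_le_mul_left (ENNReal.ofReal_le_ofReal habs) _
end

section
/- Let X be a real normed space, ε ∈ (0,1), and let v_1,…,v_k ∈ X be vectors with ‖v_i‖ = 1 for all i such that dist(v_i, span{v_1,…,v_{i−1}}) > 1 − ε for all 2 ≤ i ≤ k. Then for every 1 ≤ i ≤ k, dist(v_i, span{v_j : j ≠ i}) ≥ ((1−ε)/(2−ε))^{k−1} (1−ε). -/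
lemma key_coeff_bound
    {X : Type*} [NormedAddCommGroup X] [NormedSpace ℝ X]
    {ε : ℝ} (hε : ε ∈ Set.Ioo (0 : ℝ) 1)
    {k : ℕ} (v : Fin k → X) (hunit : ∀ i, ‖v i‖ = 1)
    (hd : ∀ i : Fin k, 1 - ε < Metric.infDist (v i)
      ((Submodule.span ℝ (v '' {j | (j : ℕ) < (i : ℕ)}) : Submodule ℝ X) : Set X)) :
    ∀ m : ℕ, m ≤ k → ∀ a : Fin k → ℝ, ∀ i : Fin k, (i : ℕ) < m →
      ((1 - ε) / (2 - ε)) ^ (m - 1 - (i : ℕ)) * (1 - ε) * |a i| ≤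
        ‖∑ j ∈ Finset.univ.filter (fun j : Fin k => (j : ℕ) < m), a j • v j‖ := by
  obtain ⟨hε0, hε1⟩ := hε
  have h1 : (0:ℝ) < 1 - ε := by linarith
  have h2 : (0:ℝ) < 2 - ε := by linarith
  have hc0 : (0:ℝ) < (1 - ε) / (2 - ε) := div_pos h1 h2
  have hc1 : (1 - ε) / (2 - ε) ≤ 1 := by
    rw [div_le_one h2]; linarith
  intro m
  induction m with
  | zero => intro _ a i hi; omega
  | succ m ih =>
    intro hmk a i hi
    have hm : m < k := hmk
    set M : Fin k := ⟨m, hm⟩ with hM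
    set S := ∑ j ∈ Finset.univ.filter (fun j : Fin k => (j : ℕ) < m), a j • v j with hS
    have hsplit : ∑ j ∈ Finset.univ.filter (fun j : Fin k => (j : ℕ) < m + 1), a j • v j
        = a M • v M + S := by
      have : Finset.univ.filter (fun j : Fin k => (j : ℕ) < m + 1)
          = insert M (Finset.univ.filter (fun j : Fin k => (j : ℕ) < m)) := by
        ext j
        simp only [Finset.mem_filter, Finset.mem_insert, Finset.mem_univ, true_and]
        constructor
        · intro hj
          rcases Nat.lt_succ_iff_lt_or_eq.mp hj with h | h
          · exact Or.inr h
          · exact Or.inl (Fin.ext h)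
        · rintro (rfl | h)
          · exact Nat.lt_succ_self m
          · exact Nat.lt_succ_of_lt h
      rw [this, Finset.sum_insert (by simp [hM])]
    have hSmem : S ∈ Submodule.span ℝ (v '' {j | (j : ℕ) < (M : ℕ)}) := by
      apply Submodule.sum_mem
      intro j hj
      simp only [Finset.mem_filter] at hj
      exact Submodule.smul_mem _ _ (Submodule.subset_span ⟨j, hj.2, rfl⟩)
    -- base bound
    have hbase : (1 - ε) * |a M| ≤ ‖a M • v M + S‖ := by
      rcases eq_or_ne (a M) 0 with h0 | h0
      · simp [h0]
      · have hmemneg : -((a M)⁻¹ • S) ∈ Submodule.span ℝ (v '' {j | (j : ℕ) < (M : ℕ)}) :=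
          Submodule.neg_mem _ (Submodule.smul_mem _ _ hSmem)
        have hle : Metric.infDist (v M)
            ((Submodule.span ℝ (v '' {j | (j : ℕ) < (M : ℕ)}) : Submodule ℝ X) : Set X)
            ≤ ‖v M + (a M)⁻¹ • S‖ := by
          have := Metric.infDist_le_dist_of_mem (x := v M) hmemneg
          rwa [dist_eq_norm, sub_neg_eq_add] at this
        have hgt : 1 - ε < ‖v M + (a M)⁻¹ • S‖ := lt_of_lt_of_le (hd M) hle
        have : ‖a M • v M + S‖ = |a M| * ‖v M + (a M)⁻¹ • S‖ := by
          rw [← Real.norm_eq_abs, ← norm_smul, smul_add, smul_smul,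
            mul_inv_cancel₀ h0, one_smul]
        rw [this]
        have : 0 < |a M| := abs_pos.mpr h0
        nlinarith
    rw [hsplit]
    rcases Nat.lt_succ_iff_lt_or_eq.mp hi with hlt | heq
    · -- i < m
      have hIH := ih (le_of_lt hm) a i hlt
      set c := (1 - ε) / (2 - ε) with hcdef
      set T := a M • v M + S with hT
      have haM : |a M| ≤ ‖T‖ / (1 - ε) := by
        rw [le_div_iff₀ h1]; nlinarith [hbase]
      have hST : ‖S‖ ≤ ‖T‖ * (2 - ε) / (1 - ε) := by
        have : ‖S‖ ≤ ‖T‖ + ‖a M • v M‖ := by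
          calc ‖S‖ = ‖T - a M • v M‖ := by rw [hT, add_sub_cancel_left]
            _ ≤ ‖T‖ + ‖a M • v M‖ := norm_sub_le _ _
        have hnorm : ‖a M • v M‖ = |a M| := by
          rw [norm_smul, hunit, mul_one, Real.norm_eq_abs]
        rw [hnorm] at this
        have h4 : ‖T‖ + ‖T‖ / (1 - ε) = ‖T‖ * (2 - ε) / (1 - ε) := by
          field_simp; ring
        linarith [haM]
      have hexp : m + 1 - 1 - (i : ℕ) = (m - 1 - (i : ℕ)) + 1 := by omega
      rw [hexp, pow_succ]
      calc c ^ (m - 1 - (i : ℕ)) * c * (1 - ε) * |a i|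
          = c * (c ^ (m - 1 - (i : ℕ)) * (1 - ε) * |a i|) := by ring
        _ ≤ c * ‖S‖ := by
            apply mul_le_mul_of_nonneg_left hIH (le_of_lt hc0)
        _ ≤ c * (‖T‖ * (2 - ε) / (1 - ε)) := mul_le_mul_of_nonneg_left hST (le_of_lt hc0)
        _ = ‖T‖ := by rw [hcdef]; field_simp
    · -- i = m
      have hiM : i = M := Fin.ext heq
      have hexp : m + 1 - 1 - (i : ℕ) = 0 := by omega
      rw [hexp, pow_zero, one_mul, hiM]
      exact hbase

/-- If `v_1,…,v_k` are unit vectors with `dist(v_i, span{v_1,…,v_{i−1}}) > 1 − ε`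
for all `i`, then each `v_i` keeps distance at least `((1−ε)/(2−ε))^{k−1}(1−ε)`
from the span of all the other vectors. -/
theorem infDist_span_others_ge
    {X : Type*} [NormedAddCommGroup X] [NormedSpace ℝ X]
    {ε : ℝ} (hε : ε ∈ Set.Ioo (0 : ℝ) 1)
    {k : ℕ} (v : Fin k → X) (hunit : ∀ i, ‖v i‖ = 1)
    (hd : ∀ i : Fin k, 1 - ε < Metric.infDist (v i)
      ((Submodule.span ℝ (v '' {j | (j : ℕ) < (i : ℕ)}) : Submodule ℝ X) : Set X)) :
    ∀ i : Fin k, ((1 - ε) / (2 - ε)) ^ (k - 1) * (1 - ε)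
      ≤ Metric.infDist (v i)
          ((Submodule.span ℝ (v '' {j | j ≠ i}) : Submodule ℝ X) : Set X) := by
  obtain ⟨hε0, hε1⟩ := hε
  have h1 : (0:ℝ) < 1 - ε := by linarith
  have h2 : (0:ℝ) < 2 - ε := by linarith
  have hc0 : (0:ℝ) < (1 - ε) / (2 - ε) := div_pos h1 h2
  have hc1 : (1 - ε) / (2 - ε) ≤ 1 := by rw [div_le_one h2]; linarith
  intro i
  by_contra hcon
  push_neg at hcon
  rw [Metric.infDist_lt_iff ⟨0, Submodule.zero_mem _⟩] at hcon
  obtain ⟨w, hw, hdw⟩ := hcon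
  suffices h : ((1 - ε) / (2 - ε)) ^ (k - 1) * (1 - ε) ≤ dist (v i) w by linarith

  rw [SetLike.mem_coe, Finsupp.mem_span_image_iff_linearCombination] at hw
  obtain ⟨l, hlsupp, hlw⟩ := hw
  have hli : l i = 0 := by
    by_contra h
    exact (hlsupp (Finsupp.mem_support_iff.mpr h)) rfl
  set a : Fin k → ℝ := fun j => if j = i then 1 else -(l j) with ha
  have hsum : ∑ j ∈ Finset.univ.filter (fun j : Fin k => (j : ℕ) < k), a j • v j
      = v i - w := by
    have hfilt : Finset.univ.filter (fun j : Fin k => (j : ℕ) < k)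
        = (Finset.univ : Finset (Fin k)) := by
      ext j; simp [j.isLt]
    rw [hfilt, ← hlw, Finsupp.linearCombination_apply,
      Finsupp.sum_fintype _ _ (by intro j; simp)]
    have hrhs : v i - ∑ j : Fin k, l j • v j
        = ∑ j : Fin k, ((if j = i then (1:ℝ) else 0) - l j) • v j := by
      simp [sub_smul, Finset.sum_sub_distrib, ite_smul, Finset.sum_ite_eq']
    rw [hrhs]
    apply Finset.sum_congr rfl
    intro j _
    rcases eq_or_ne j i with rfl | hji
    · simp [ha, hli]
    · simp [ha, hji]
  have hkey := key_coeff_bound ⟨hε0, hε1⟩ v hunit hd k le_rfl a i i.isLt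
  rw [hsum] at hkey
  have hai : a i = 1 := by simp [ha]
  rw [hai, abs_one, mul_one] at hkey
  rw [dist_eq_norm]
  refine le_trans ?_ hkey
  have hpow : ((1 - ε) / (2 - ε)) ^ (k - 1) ≤ ((1 - ε) / (2 - ε)) ^ (k - 1 - (i : ℕ)) :=
    pow_le_pow_of_le_one (le_of_lt hc0) hc1 (by omega)
  nlinarith [hpow]
end

section
/- Let X be a compact metric space, f : X → X a continuous map, λ a Borel probability measure on X, and (L_k)_{k≥0} a sequence of Borel subsets of X with λ(L_k) → 0 as k → ∞. If for some strictly increasing sequence (n_i) of positive integers the measures (1/n_i) Σ_{k=0}^{n_i−1} (f^k)_*λ converge in the weak* topology to a Borel probability measure μ, then also (1/n_i) Σ_{k=0}^{n_i−1} (f^k)_*(λ|_{X∖L_k}) → μ in the weak* topology. -/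
open MeasureTheory Filter Topology

open scoped ENNReal

/-- If `λ(L_k) → 0`, then discarding the sets `L_k` does not change the weak*
limit of the averaged pushforward measures `(1/n_i) Σ_{k<n_i} (f^k)_*λ`. -/
theorem weakstar_limit_of_averages_restricted
    {X : Type*} [MetricSpace X] [CompactSpace X]
    [MeasurableSpace X] [BorelSpace X]
    (f : X → X) (hf : Continuous f)
    (lam μ : Measure X)
    (hlam : IsProbabilityMeasure lam) (hμ : IsProbabilityMeasure μ)
    (L : ℕ → Set X) (hL : ∀ k, MeasurableSet (L k))
    (hL0 : Tendsto (fun k => lam (L k)) atTop (𝓝 0))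
    (n : ℕ → ℕ) (hmono : StrictMono n) (hpos : ∀ i, 0 < n i)
    (hconv : ∀ g : C(X, ℝ),
      Tendsto
        (fun i => ∫ x, g x ∂(((n i : ℝ≥0∞))⁻¹ •
          ∑ k ∈ Finset.range (n i), Measure.map (f^[k]) lam))
        atTop (𝓝 (∫ x, g x ∂μ))) :
    ∀ g : C(X, ℝ),
      Tendsto
        (fun i => ∫ x, g x ∂(((n i : ℝ≥0∞))⁻¹ •
          ∑ k ∈ Finset.range (n i),
            Measure.map (f^[k]) (lam.restrict (L k)ᶜ)))
        atTop (𝓝 (∫ x, g x ∂μ)) := by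
  intro g
  have hfm : ∀ k, Measurable (f^[k]) := fun k => (hf.iterate k).measurable
  -- finiteness instances
  have hfin : ∀ (k : ℕ) (s : Set X), IsFiniteMeasure (Measure.map (f^[k]) (lam.restrict s)) :=
    fun k s => Measure.isFiniteMeasure_map _ _
  -- integrability of g wrt any finite measure
  have hint : ∀ (ν : Measure X), IsFiniteMeasure ν → Integrable (fun x => g x) ν := by
    intro ν hν
    exact g.continuous.integrable_of_hasCompactSupport (HasCompactSupport.of_compactSpace _)
  -- the error term
  set d : ℕ → ℝ := fun k => ∫ x, g x ∂(Measure.map (f^[k]) (lam.restrict (L k))) with hd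
  have hbound : ∀ k, |d k| ≤ ‖g‖ * (lam (L k)).toReal := by
    intro k
    have h1 : ‖∫ x, g x ∂(Measure.map (f^[k]) (lam.restrict (L k)))‖ ≤
        ‖g‖ * ((Measure.map (f^[k]) (lam.restrict (L k))) Set.univ).toReal := by
      apply norm_integral_le_of_norm_le_const
      exact Eventually.of_forall fun x => g.norm_coe_le_norm x
    have h2 : (Measure.map (f^[k]) (lam.restrict (L k))) Set.univ = lam (L k) := by
      rw [Measure.map_apply (hfm k) MeasurableSet.univ, Set.preimage_univ,
        Measure.restrict_apply_univ]
    rw [h2] at h1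
    simpa [hd, Real.norm_eq_abs] using h1
  -- decomposition of the integral
  have hdecomp : ∀ i,
      (∫ x, g x ∂(((n i : ℝ≥0∞))⁻¹ •
        ∑ k ∈ Finset.range (n i), Measure.map (f^[k]) (lam.restrict (L k)ᶜ)))
      = (∫ x, g x ∂(((n i : ℝ≥0∞))⁻¹ •
          ∑ k ∈ Finset.range (n i), Measure.map (f^[k]) lam))
        - (n i : ℝ)⁻¹ * ∑ k ∈ Finset.range (n i), d k := by
    intro i
    have hsplit : ∀ k, Measure.map (f^[k]) lam
        = Measure.map (f^[k]) (lam.restrict (L k)ᶜ)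
          + Measure.map (f^[k]) (lam.restrict (L k)) := by
      intro k
      rw [← Measure.map_add _ _ (hfm k)]
      congr 1
      rw [add_comm, Measure.restrict_add_restrict_compl (hL k)]
    rw [integral_smul_measure, integral_smul_measure,
      integral_finset_sum_measure (fun k _ => hint _ (hfin k _)),
      integral_finset_sum_measure (fun k _ => hint _ (Measure.isFiniteMeasure_map _ _))]
    have : ∀ k ∈ Finset.range (n i),
        (∫ x, g x ∂(Measure.map (f^[k]) lam))
        = (∫ x, g x ∂(Measure.map (f^[k]) (lam.restrict (L k)ᶜ))) + d k := by
      intro k _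
      rw [hsplit k, integral_add_measure (hint _ (hfin k _)) (hint _ (hfin k _))]
    rw [Finset.sum_congr rfl this, Finset.sum_add_distrib]
    simp only [ENNReal.toReal_inv, ENNReal.toReal_natCast, smul_eq_mul]
    ring
  -- the error term tends to 0
  have hu0 : Tendsto (fun k => ‖g‖ * (lam (L k)).toReal) atTop (𝓝 0) := by
    have : Tendsto (fun k => (lam (L k)).toReal) atTop (𝓝 0) := by
      have := (ENNReal.tendsto_toReal (by simp)).comp hL0
      exact this
    simpa using this.const_mul ‖g‖
  have hcesaro : Tendsto (fun m : ℕ => (m : ℝ)⁻¹ * ∑ k ∈ Finset.range m, d k) atTop (𝓝 0) := by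
    have hnonneg : ∀ m : ℕ, 0 ≤ (m : ℝ)⁻¹ := fun m => by positivity
    have habs : Tendsto (fun m : ℕ => (m : ℝ)⁻¹ *
        ∑ k ∈ Finset.range m, ‖g‖ * (lam (L k)).toReal) atTop (𝓝 0) := hu0.cesaro
    apply squeeze_zero_norm _ habs
    intro m
    rw [Real.norm_eq_abs, abs_mul, abs_of_nonneg (hnonneg m)]
    refine mul_le_mul_of_nonneg_left ?_ (hnonneg m)
    exact (Finset.abs_sum_le_sum_abs _ _).trans (Finset.sum_le_sum fun k _ => hbound k)
  have herr : Tendsto (fun i => (n i : ℝ)⁻¹ * ∑ k ∈ Finset.range (n i), d k)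
      atTop (𝓝 0) := hcesaro.comp (hmono.tendsto_atTop)
  have := (hconv g).sub herr
  rw [sub_zero] at this
  simpa only [hdecomp] using this
end
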